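/- There is no commutative semigroup S with zero whose zero-divisor graph is the graph G with vertex set {a, b, c₁, x₁, x₂, y₁} and edges: a–b, a–x₁, a–x₂, b–x₁, b–x₂, x₁–x₂, a–c₁, b–c₁ (so N(c₁) = {a,b}), x₁–y₁, x₂–y₁ (so N(y₁) = {x₁,x₂}). That is, the graph of Fig.5 with m = n = 1, V = ∅, plus an edge joining x₁ and x₂, is not a semigroup graph. -/

import Mathlib

/-- A commutative semigroup with zero element. -/
structure CommSemigroupWithZero : Type 1 where
  carrier : Type
  [toCommSemigroup : CommSemigroup carrier]
  [toZero : Zero carrier]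
  zero_mul' : ∀ x : carrier, 0 * x = 0

attribute [instance] CommSemigroupWithZero.toCommSemigroup CommSemigroupWithZero.toZero

/-- A zero-divisor: a nonzero element annihilated by some nonzero element. -/
def IsZeroDivisorElem {S : Type*} [Mul S] [Zero S] (x : S) : Prop :=
  x ≠ 0 ∧ ∃ y : S, y ≠ 0 ∧ x * y = 0

/-- The zero-divisor graph Γ(S). -/
def zdGraph (S : Type*) [CommSemigroup S] [Zero S] :
    SimpleGraph {x : S // IsZeroDivisorElem x} where
  Adj a b := a ≠ b ∧ (a : S) * (b : S) = 0
  symm := by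
    constructor
    rintro a b ⟨h1, h2⟩
    exact ⟨h1.symm, by rwa [mul_comm] at h2⟩
  loopless := by constructor; rintro a ⟨h, _⟩; exact h rfl

/-- The graph of Fig.5 with m = n = 1, V = ∅, plus an edge joining x₁ and x₂, on
vertices 0=a, 1=b, 2=c₁, 3=x₁, 4=x₂, 5=y₁, with edges a–b, a–x₁, a–x₂, b–x₁, b–x₂,
x₁–x₂, a–c₁, b–c₁, x₁–y₁, x₂–y₁. -/
def fig5Graph : SimpleGraph (Fin 6) :=
  SimpleGraph.fromEdgeSet
    {s(0,1), s(0,3), s(0,4), s(1,3), s(1,4), s(3,4), s(0,2), s(1,2), s(3,5), s(4,5)}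

/-- The key algebraic fact: a commutative semigroup with zero cannot have exactly six
nonzero zero-divisors `A,B,C,P,Q,Y` whose annihilation pattern is that of `fig5Graph`. -/
lemma fig5_key (S : Type) [CommSemigroup S] [Zero S] (zmul : ∀ x : S, 0 * x = 0)
    (A B C P Q Y : S)
    (six : ∀ z : S, IsZeroDivisorElem z →
      z = A ∨ z = B ∨ z = C ∨ z = P ∨ z = Q ∨ z = Y)
    (hA : A ≠ 0) (hB : B ≠ 0) (hP : P ≠ 0)
    (hAB : A*B = 0) (hAP : A*P = 0) (hAQ : A*Q = 0) (hBP : B*P = 0) (hBQ : B*Q = 0)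
    (hPQ : P*Q = 0) (hAC : A*C = 0) (hBC : B*C = 0) (hPY : P*Y = 0) (hQY : Q*Y = 0)
    (nCP : C*P ≠ 0) (nCQ : C*Q ≠ 0) (nCY : C*Y ≠ 0) (nAY : A*Y ≠ 0) (nBY : B*Y ≠ 0) :
    False := by
  have mz : ∀ x : S, x * 0 = 0 := fun x => by rw [mul_comm]; exact zmul x
  have k1 : ∀ x y u : S, x * u = 0 → x * y * u = 0 := fun x y u h => by
    rw [mul_right_comm, h, zmul]
  have k2 : ∀ x y u : S, y * u = 0 → x * y * u = 0 := fun x y u h => by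
    rw [mul_assoc, h, mz]
  have zc : ∀ x y : S, x * y = 0 → y * x = 0 := fun x y h => by rwa [mul_comm]
  have nc : ∀ x y : S, x * y ≠ 0 → y * x ≠ 0 := fun x y h hh => h (zc _ _ hh)
  -- A*Y ∈ {A, B}
  have hAY : A*Y = A ∨ A*Y = B := by
    rcases six (A*Y) ⟨nAY, B, hB, k1 A Y B hAB⟩ with h|h|h|h|h|h
    · exact Or.inl h
    · exact Or.inr h
    · exact absurd (h ▸ k2 A Y P (zc _ _ hPY)) nCP
    · exact absurd (h ▸ k1 A Y C hAC) (nc _ _ nCP)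
    · exact absurd (h ▸ k1 A Y C hAC) (nc _ _ nCQ)
    · exact absurd (h ▸ k1 A Y C hAC) (nc _ _ nCY)
  -- B*Y ∈ {A, B}
  have hBY : B*Y = A ∨ B*Y = B := by
    rcases six (B*Y) ⟨nBY, A, hA, k1 B Y A (zc _ _ hAB)⟩ with h|h|h|h|h|h
    · exact Or.inl h
    · exact Or.inr h
    · exact absurd (h ▸ k2 B Y P (zc _ _ hPY)) nCP
    · exact absurd (h ▸ k1 B Y C hBC) (nc _ _ nCP)
    · exact absurd (h ▸ k1 B Y C hBC) (nc _ _ nCQ)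
    · exact absurd (h ▸ k1 B Y C hBC) (nc _ _ nCY)
  -- (C*Y)² = 0, since C*Y is one of A, B, P, Q, all of which it annihilates
  have kA : C*Y*A = 0 := k1 C Y A (zc _ _ hAC)
  have kB : C*Y*B = 0 := k1 C Y B (zc _ _ hBC)
  have kP : C*Y*P = 0 := k2 C Y P (zc _ _ hPY)
  have kQ : C*Y*Q = 0 := k2 C Y Q (zc _ _ hQY)
  have hCYsq : (C*Y)*(C*Y) = 0 := by
    rcases six (C*Y) ⟨nCY, A, hA, kA⟩ with h|h|h|h|h|h
    · nth_rewrite 2 [h]; exact kA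
    · nth_rewrite 2 [h]; exact kB
    · exact absurd (h ▸ kP) nCP
    · nth_rewrite 2 [h]; exact kP
    · nth_rewrite 2 [h]; exact kQ
    · exact absurd (h ▸ kA) (nc _ _ nAY)
  -- C*P, C*Q ∈ {P, Q}
  have hCP2 : C*P = P ∨ C*P = Q := by
    rcases six (C*P) ⟨nCP, A, hA, k1 C P A (zc _ _ hAC)⟩ with h|h|h|h|h|h
    · exact absurd (h ▸ k2 C P Y hPY) nAY
    · exact absurd (h ▸ k2 C P Y hPY) nBY
    · exact absurd (h ▸ k2 C P Y hPY) nCY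
    · exact Or.inl h
    · exact Or.inr h
    · exact absurd (h ▸ k1 C P A (zc _ _ hAC)) (nc _ _ nAY)
  have hCQ2 : C*Q = P ∨ C*Q = Q := by
    rcases six (C*Q) ⟨nCQ, A, hA, k1 C Q A (zc _ _ hAC)⟩ with h|h|h|h|h|h
    · exact absurd (h ▸ k2 C Q Y hQY) nAY
    · exact absurd (h ▸ k2 C Q Y hQY) nBY
    · exact absurd (h ▸ k2 C Q Y hQY) nCY
    · exact Or.inl h
    · exact Or.inr h
    · exact absurd (h ▸ k1 C Q A (zc _ _ hAC)) (nc _ _ nAY)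
  -- Y is idempotent
  have hYYA : Y*Y*A ≠ 0 := by
    have h1 : Y*Y*A = A*Y*Y := by rw [mul_comm (Y*Y) A, ← mul_assoc]
    rcases hAY with h|h
    · rw [h1, h]; exact nAY
    · rw [h1, h]; exact nBY
  have hYYB : Y*Y*B ≠ 0 := by
    have h1 : Y*Y*B = B*Y*Y := by rw [mul_comm (Y*Y) B, ← mul_assoc]
    rcases hBY with h|h
    · rw [h1, h]; exact nAY
    · rw [h1, h]; exact nBY
  have hYYP : Y*Y*P = 0 := k2 Y Y P (zc _ _ hPY)
  have hYY : Y*Y = Y := by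
    have hne : Y*Y ≠ 0 := fun h => hYYA (by rw [h, zmul])
    rcases six (Y*Y) ⟨hne, P, hP, hYYP⟩ with h|h|h|h|h|h
    · exact absurd hAB (h ▸ hYYB)
    · exact absurd (zc _ _ hAB) (h ▸ hYYA)
    · exact absurd (h ▸ hYYP) nCP
    · exact absurd (zc _ _ hAP) (h ▸ hYYA)
    · exact absurd (zc _ _ hAQ) (h ▸ hYYA)
    · exact h
  -- C is idempotent
  have hCCP : C*C*P ≠ 0 := by
    have h1 : C*C*P = C*(C*P) := mul_assoc C C P
    rcases hCP2 with h|h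
    · rw [h1, h]; exact nCP
    · rw [h1, h]; exact nCQ
  have hCCQ : C*C*Q ≠ 0 := by
    have h1 : C*C*Q = C*(C*Q) := mul_assoc C C Q
    rcases hCQ2 with h|h
    · rw [h1, h]; exact nCP
    · rw [h1, h]; exact nCQ
  have hCCA : C*C*A = 0 := k2 C C A (zc _ _ hAC)
  have hCC : C*C = C := by
    have hne : C*C ≠ 0 := fun h => hCCP (by rw [h, zmul])
    rcases six (C*C) ⟨hne, A, hA, hCCA⟩ with h|h|h|h|h|h
    · exact absurd hAP (h ▸ hCCP)
    · exact absurd hBP (h ▸ hCCP)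
    · exact h
    · exact absurd hPQ (h ▸ hCCQ)
    · exact absurd (zc _ _ hPQ) (h ▸ hCCP)
    · exact absurd (h ▸ hCCA) (nc _ _ nAY)
  -- contradiction: (C*Y)² = (C*C)*(Y*Y) = C*Y ≠ 0
  have : C*Y = 0 := by rwa [mul_mul_mul_comm, hCC, hYY] at hCYsq
  exact nCY this

/-- The graph of Fig.5 with m = n = 1, V = ∅ and an extra edge x₁–x₂ is not a
semigroup graph. -/
theorem fig5_plus_edge_not_semigroup_graph :
    ¬ ∃ T : CommSemigroupWithZero, Nonempty (fig5Graph ≃g zdGraph T.carrier) := by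
  rintro ⟨T, ⟨e⟩⟩
  have hadj : ∀ i j : Fin 6, fig5Graph.Adj i j →
      ((e i : T.carrier) * (e j : T.carrier) = 0) := fun i j h =>
    (e.map_adj_iff.mpr h).2
  have hnadj : ∀ i j : Fin 6, i ≠ j → ¬ fig5Graph.Adj i j →
      ((e i : T.carrier) * (e j : T.carrier) ≠ 0) := by
    intro i j hij h hmul
    exact h (e.map_adj_iff.mp ⟨fun hh => hij (e.toEquiv.injective hh), hmul⟩)
  have six : ∀ z : T.carrier, IsZeroDivisorElem z →
      z = (e 0 : T.carrier) ∨ z = (e 1 : T.carrier) ∨ z = (e 2 : T.carrier) ∨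
      z = (e 3 : T.carrier) ∨ z = (e 4 : T.carrier) ∨ z = (e 5 : T.carrier) := by
    intro z hz
    obtain ⟨i, hi⟩ : ∃ i, e i = ⟨z, hz⟩ := ⟨e.toEquiv.symm ⟨z, hz⟩, e.toEquiv.apply_symm_apply _⟩
    have hz' : (e i : T.carrier) = z := congrArg Subtype.val hi
    fin_cases i
    · exact Or.inl hz'.symm
    · exact Or.inr (Or.inl hz'.symm)
    · exact Or.inr (Or.inr (Or.inl hz'.symm))
    · exact Or.inr (Or.inr (Or.inr (Or.inl hz'.symm)))
    · exact Or.inr (Or.inr (Or.inr (Or.inr (Or.inl hz'.symm))))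
    · exact Or.inr (Or.inr (Or.inr (Or.inr (Or.inr hz'.symm))))
  exact fig5_key T.carrier T.zero_mul' (e 0) (e 1) (e 2) (e 3) (e 4) (e 5) six
    (e 0).2.1 (e 1).2.1 (e 3).2.1
    (hadj 0 1 (by simp [fig5Graph, SimpleGraph.fromEdgeSet_adj, Sym2.eq_iff]))
    (hadj 0 3 (by simp [fig5Graph, SimpleGraph.fromEdgeSet_adj, Sym2.eq_iff]))
    (hadj 0 4 (by simp [fig5Graph, SimpleGraph.fromEdgeSet_adj, Sym2.eq_iff]))
    (hadj 1 3 (by simp [fig5Graph, SimpleGraph.fromEdgeSet_adj, Sym2.eq_iff]))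
    (hadj 1 4 (by simp [fig5Graph, SimpleGraph.fromEdgeSet_adj, Sym2.eq_iff]))
    (hadj 3 4 (by simp [fig5Graph, SimpleGraph.fromEdgeSet_adj, Sym2.eq_iff]))
    (hadj 0 2 (by simp [fig5Graph, SimpleGraph.fromEdgeSet_adj, Sym2.eq_iff]))
    (hadj 1 2 (by simp [fig5Graph, SimpleGraph.fromEdgeSet_adj, Sym2.eq_iff]))
    (hadj 3 5 (by simp [fig5Graph, SimpleGraph.fromEdgeSet_adj, Sym2.eq_iff]))
    (hadj 4 5 (by simp [fig5Graph, SimpleGraph.fromEdgeSet_adj, Sym2.eq_iff]))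
    (hnadj 2 3 (by decide) (by simp [fig5Graph, SimpleGraph.fromEdgeSet_adj, Sym2.eq_iff]))
    (hnadj 2 4 (by decide) (by simp [fig5Graph, SimpleGraph.fromEdgeSet_adj, Sym2.eq_iff]))
    (hnadj 2 5 (by decide) (by simp [fig5Graph, SimpleGraph.fromEdgeSet_adj, Sym2.eq_iff]))
    (hnadj 0 5 (by decide) (by simp [fig5Graph, SimpleGraph.fromEdgeSet_adj, Sym2.eq_iff]))
    (hnadj 1 5 (by decide) (by simp [fig5Graph, SimpleGraph.fromEdgeSet_adj, Sym2.eq_iff]))
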